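/- Let 0 < ρ < 1, μ₁,μ₂ > 0 with SNR₁ = (ρ/(1-ρ²))(μ₁/μ₂ + ρ), SNR₂ = (ρ/(1-ρ²))(μ₂/μ₁ + ρ), γ = 1/(1 + SNR₁ + SNR₂), a_j = √(SNR_j/(1+SNR_j)). If μ₁μ₂ = (γ²/ρ)·SNR₁·SNR₂, then [a₁ a₂]·K_y⁻¹ = [γ·SNR₁/a₁, γ·SNR₂/a₂] = [μ₁, μ₂], where K_y = [[1,ρ],[ρ,1]]. -/

import Mathlib

open Matrix

theorem stmt7 (ρ μ₁ μ₂ : ℝ) (hρ : 0 < ρ) (hρ1 : ρ < 1)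
    (hμ₁ : 0 < μ₁) (hμ₂ : 0 < μ₂)
    (SNR₁ SNR₂ γ a₁ a₂ : ℝ)
    (hS₁ : SNR₁ = ρ / (1 - ρ ^ 2) * (μ₁ / μ₂ + ρ))
    (hS₂ : SNR₂ = ρ / (1 - ρ ^ 2) * (μ₂ / μ₁ + ρ))
    (hγ : γ = 1 / (1 + SNR₁ + SNR₂))
    (ha₁ : a₁ = Real.sqrt (SNR₁ / (1 + SNR₁)))
    (ha₂ : a₂ = Real.sqrt (SNR₂ / (1 + SNR₂)))
    (K : Matrix (Fin 2) (Fin 2) ℝ) (hK : K = !![1, ρ; ρ, 1])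
    (hnorm : μ₁ * μ₂ = γ ^ 2 / ρ * SNR₁ * SNR₂) :
    Matrix.vecMul ![a₁, a₂] K⁻¹ = ![γ * SNR₁ / a₁, γ * SNR₂ / a₂] ∧
    Matrix.vecMul ![a₁, a₂] K⁻¹ = ![μ₁, μ₂] := by
  have h1ρ : (0:ℝ) < 1 - ρ ^ 2 := by nlinarith
  obtain ⟨P, hP⟩ : ∃ P : ℝ, P = μ₁ + ρ * μ₂ := ⟨_, rfl⟩
  obtain ⟨Q, hQ⟩ : ∃ Q : ℝ, Q = μ₂ + ρ * μ₁ := ⟨_, rfl⟩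
  have hPpos : 0 < P := by rw [hP]; positivity
  have hQpos : 0 < Q := by rw [hQ]; positivity
  have hS₁' : SNR₁ = ρ * P / ((1 - ρ ^ 2) * μ₂) := by
    rw [hS₁, hP]; field_simp
  have hS₂' : SNR₂ = ρ * Q / ((1 - ρ ^ 2) * μ₁) := by
    rw [hS₂, hQ]; field_simp
  have h1S₁ : 1 + SNR₁ = Q / ((1 - ρ ^ 2) * μ₂) := by
    rw [hS₁', hQ, hP]; field_simp; ring
  have h1S₂ : 1 + SNR₂ = P / ((1 - ρ ^ 2) * μ₁) := by
    rw [hS₂', hQ, hP]; field_simp; ring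
  have hsum : 1 + SNR₁ + SNR₂ = P * Q / ((1 - ρ ^ 2) * μ₁ * μ₂) := by
    rw [hS₁', hS₂', hP, hQ]; field_simp; ring
  have hγ' : γ = (1 - ρ ^ 2) * μ₁ * μ₂ / (P * Q) := by
    rw [hγ, hsum]; field_simp
  have hkey : γ ^ 2 / ρ * SNR₁ * SNR₂ = ρ * μ₁ * μ₂ / (P * Q) := by
    rw [hγ', hS₁', hS₂']; field_simp
  have hPQ : P * Q = ρ := by
    rw [hkey] at hnorm
    field_simp at hnorm
    nlinarith [mul_pos hμ₁ hμ₂]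
  have hfrac₁ : SNR₁ / (1 + SNR₁) = ρ * P / Q := by
    rw [h1S₁, hS₁']; field_simp
  have hfrac₂ : SNR₂ / (1 + SNR₂) = ρ * Q / P := by
    rw [h1S₂, hS₂']; field_simp
  have ha₁' : a₁ = P := by
    have h : SNR₁ / (1 + SNR₁) = P ^ 2 := by
      rw [hfrac₁, ← hPQ]; field_simp
    rw [ha₁, h, Real.sqrt_sq hPpos.le]
  have ha₂' : a₂ = Q := by
    have h : SNR₂ / (1 + SNR₂) = Q ^ 2 := by
      rw [hfrac₂, ← hPQ]; field_simp
    rw [ha₂, h, Real.sqrt_sq hQpos.le]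
  have hg1 : γ * SNR₁ = ρ * μ₁ / Q := by
    rw [hγ', hS₁']; field_simp
  have hg1' : γ * SNR₁ = P * μ₁ := by
    rw [hg1, ← hPQ]; field_simp
  have hg2 : γ * SNR₂ = ρ * μ₂ / P := by
    rw [hγ', hS₂']; field_simp
  have hg2' : γ * SNR₂ = Q * μ₂ := by
    rw [hg2, ← hPQ]; field_simp
  have hKinv : K⁻¹ = !![1 / (1 - ρ ^ 2), -ρ / (1 - ρ ^ 2);
      -ρ / (1 - ρ ^ 2), 1 / (1 - ρ ^ 2)] := by
    apply Matrix.inv_eq_right_inv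
    rw [hK, Matrix.mul_fin_two]
    ext i j
    fin_cases i <;> fin_cases j <;> simp <;> field_simp <;> ring
  have hvec : Matrix.vecMul ![a₁, a₂] K⁻¹ = ![μ₁, μ₂] := by
    funext i
    fin_cases i <;>
      · simp [hKinv, Matrix.vecMul, dotProduct, Fin.sum_univ_two, ha₁', ha₂']
        rw [hP, hQ]
        field_simp
        ring
  refine ⟨?_, hvec⟩
  rw [hvec]
  funext i
  fin_cases i <;> simp [hg1', hg2', ha₁', ha₂'] <;>
    field_simp
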